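/- Let q be a prime power, H the Hermitian curve, and m ≥ 1. The q^{3m} functions H^m → F_{q²} given by (x_1,y_1,…,x_m,y_m) ↦ ∏_{k=1}^m x_k^{i_k} y_k^{j_k}, where 0 ≤ i_k < q² and 0 ≤ j_k < q for all k, are linearly independent over F_{q²}; since |H^m| = q^{3m}, they form a basis of the F_{q²}-vector space of all functions H^m → F_{q²}. -/

import Mathlib

/-- The Hermitian curve `H = {(x,y) ∈ F² : x^(q+1) = y + y^q}` (here `F` is the field
with `q²` elements; `x^(q+1)` is the norm and `y + y^q` the trace down to `F_q`). -/
def Hset (F : Type*) [Field F] (q : ℕ) : Set (F × F) :=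
  {p | p.1 ^ (q + 1) = p.2 + p.2 ^ q}

/-- The Hermitian curve as a subtype (the domain of the Hermitian code). -/
abbrev Hsub (F : Type*) [Field F] (q : ℕ) : Type _ :=
  {p : F × F // p.1 ^ (q + 1) = p.2 + p.2 ^ q}

open Polynomial Finset

set_option linter.unusedSectionVars false

section Aux
variable {F : Type*} [Field F] [Fintype F] [DecidableEq F]

/-- Elements satisfying a condition implying they are roots of a nonzero polynomial
are at most `natDegree` many. -/
lemma aux_card_le (P : F[X]) (hP : P ≠ 0) (cond : F → Prop) [DecidablePred cond]
    (h : ∀ y, cond y → P.eval y = 0) :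
    (Finset.univ.filter cond).card ≤ P.natDegree := by
  calc (Finset.univ.filter cond).card ≤ P.roots.toFinset.card := by
        apply Finset.card_le_card
        intro y hy
        simp only [Finset.mem_filter, Finset.mem_univ, true_and] at hy
        simp [Multiset.mem_toFinset, Polynomial.mem_roots hP, Polynomial.IsRoot, h y hy]
    _ ≤ Multiset.card P.roots := Multiset.toFinset_card_le _
    _ ≤ P.natDegree := Polynomial.card_roots' P

/-- A polynomial expression of degree `< N` vanishing on a set of at least `N` points has
all coefficients zero. -/
lemma aux_vanish {N : ℕ} (S : Finset F) (hS : N ≤ S.card) (h : Fin N → F)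
    (hv : ∀ y ∈ S, ∑ j : Fin N, h j * y ^ (j : ℕ) = 0) : ∀ j, h j = 0 := by
  rcases Nat.eq_zero_or_pos N with hN | hN
  · subst hN; exact fun j => j.elim0
  set P : F[X] := ∑ j : Fin N, C (h j) * X ^ (j : ℕ) with hPdef
  have heval : ∀ y : F, P.eval y = ∑ j : Fin N, h j * y ^ (j : ℕ) := by
    intro y
    simp [hPdef, Polynomial.eval_finset_sum]
  have hdeg : P.natDegree ≤ N - 1 := by
    apply Polynomial.natDegree_sum_le_of_forall_le
    intro j _
    calc (C (h j) * X ^ (j : ℕ)).natDegree ≤ (X ^ (j : ℕ) : F[X]).natDegree :=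
          Polynomial.natDegree_C_mul_le _ _
      _ = (j : ℕ) := Polynomial.natDegree_X_pow _
      _ ≤ N - 1 := by omega
  have hP0 : P = 0 := by
    apply Polynomial.eq_zero_of_natDegree_lt_card_of_eval_eq_zero' P S
    · intro y hy; rw [heval]; exact hv y hy
    · omega
  intro j
  have hc : P.coeff (j : ℕ) = h j := by
    rw [hPdef, Polynomial.finset_sum_coeff]
    rw [Finset.sum_eq_single j]
    · simp [Polynomial.coeff_C_mul, Polynomial.coeff_X_pow]
    · intro b _ hb
      simp only [Polynomial.coeff_C_mul, Polynomial.coeff_X_pow, Fin.val_eq_val]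
      simp [Ne.symm hb]
    · simp
  rw [← hc, hP0, Polynomial.coeff_zero]

end Aux

section Fiber
variable {F : Type*} [Field F] [Fintype F] [DecidableEq F]
  {q : ℕ} (hq2 : 2 ≤ q) (hfrob : ∀ a b : F, (a + b) ^ q = a ^ q + b ^ q)
  (hcard : Fintype.card F = q ^ 2)

include hq2 hfrob hcard in
/-- For each `x`, there are exactly `q` values of `y` with `(x,y)` on the Hermitian curve. -/
lemma fiber_card (x : F) :
    (Finset.univ.filter (fun y : F => x ^ (q + 1) = y + y ^ q)).card = q := by
  have hpowc : ∀ a : F, a ^ q ^ 2 = a := by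
    intro a; rw [← hcard]; exact FiniteField.pow_card a
  have hqq : ∀ a : F, (a ^ q) ^ q = a := by
    intro a; rw [← pow_mul, ← sq]; exact hpowc a
  set K := Finset.univ.filter (fun y : F => y + y ^ q = 0) with hK
  have hPK : ((X : F[X]) ^ q + X) ≠ 0 := by
    have : ((X : F[X]) ^ q + X).Monic := by
      apply Polynomial.monic_X_pow_add
      rw [Polynomial.degree_X]
      exact_mod_cast (by omega : 1 < q)
    exact this.ne_zero
  have hKle : K.card ≤ q := by
    calc K.card ≤ ((X : F[X]) ^ q + X).natDegree :=
          aux_card_le _ hPK _ (by intro y hy; simpa [add_comm] using hy)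
      _ ≤ q := by
          apply le_trans (Polynomial.natDegree_add_le _ _)
          simp
          omega
  set R := Finset.univ.filter (fun z : F => z ^ q = z) with hR
  have hPR : ((X : F[X]) ^ q - X) ≠ 0 := by
    have : ((X : F[X]) ^ q - X).Monic := by
      apply Polynomial.monic_X_pow_sub
      rw [Polynomial.degree_X]
      exact_mod_cast (by omega : 1 < q)
    exact this.ne_zero
  have hRle : R.card ≤ q := by
    calc R.card ≤ ((X : F[X]) ^ q - X).natDegree :=
          aux_card_le _ hPR _ (by intro y hy; simp [sub_eq_zero, hy])
      _ ≤ q := by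
          apply le_trans (Polynomial.natDegree_sub_le _ _)
          simp
          omega
  set I := Finset.univ.image (fun y : F => y + y ^ q) with hI
  have hIR : I ⊆ R := by
    intro z hz
    simp only [hI, Finset.mem_image, Finset.mem_univ, true_and] at hz
    obtain ⟨y, rfl⟩ := hz
    simp only [hR, Finset.mem_filter, Finset.mem_univ, true_and]
    rw [hfrob, hqq, add_comm]
  have hIle : I.card ≤ q := le_trans (Finset.card_le_card hIR) hRle
  have hfib : ∀ t : F, (∃ y₀ : F, y₀ + y₀ ^ q = t) →
      (Finset.univ.filter (fun y : F => y + y ^ q = t)).card = K.card := by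
    rintro t ⟨y₀, hy₀⟩
    apply Finset.card_bij (fun y _ => y - y₀)
    · intro y hy
      simp only [Finset.mem_filter, Finset.mem_univ, true_and] at hy ⊢
      have : (y - y₀) + (y - y₀) ^ q = (y + y ^ q) - (y₀ + y₀ ^ q) := by
        have h1 : y = (y - y₀) + y₀ := by ring
        have h2 : y ^ q = ((y - y₀) + y₀) ^ q := by rw [← h1]
        rw [h2, hfrob]; ring
      rw [hK, Finset.mem_filter]
      refine ⟨Finset.mem_univ _, ?_⟩
      rw [this, hy, hy₀, sub_self]
    · intro a ha b hb hab
      simpa [sub_left_inj] using hab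
    · intro k hk
      simp only [hK, Finset.mem_filter, Finset.mem_univ, true_and] at hk
      refine ⟨k + y₀, ?_, by ring⟩
      simp only [Finset.mem_filter, Finset.mem_univ, true_and]
      rw [hfrob]
      calc k + y₀ + (k ^ q + y₀ ^ q) = (k + k ^ q) + (y₀ + y₀ ^ q) := by ring
        _ = t := by rw [hk, hy₀, zero_add]
  have hcount : q ^ 2 = I.card * K.card := by
    rw [← hcard, ← Finset.card_univ]
    rw [Finset.card_eq_sum_card_fiberwise (f := fun y : F => y + y ^ q) (t := I)
      (fun y _ => Finset.mem_image_of_mem _ (Finset.mem_univ y))]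
    rw [Finset.sum_congr rfl (fun t ht => ?_), Finset.sum_const, smul_eq_mul]
    simp only [hI, Finset.mem_image, Finset.mem_univ, true_and] at ht
    exact hfib t ht
  have hq0 : 0 < q := by omega
  have hKq : K.card = q := by
    have h1 : q * q ≤ q * K.card := by
      calc q * q = q ^ 2 := (sq q).symm
        _ = I.card * K.card := hcount
        _ ≤ q * K.card := Nat.mul_le_mul_right _ hIle
    have := Nat.le_of_mul_le_mul_left h1 hq0
    omega
  have hIq : I.card = q := by
    have h2 : q ^ 2 = I.card * q := by rw [hcount, hKq]
    rw [sq] at h2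
    have := Nat.eq_of_mul_eq_mul_right hq0 h2.symm
    omega
  have hIReq : I = R := Finset.eq_of_subset_of_card_le hIR (by omega)
  have hxR : x ^ (q + 1) ∈ R := by
    simp only [hR, Finset.mem_filter, Finset.mem_univ, true_and]
    rw [← pow_mul]
    have : (q + 1) * q = q ^ 2 + q := by ring
    rw [this, pow_add, hpowc, ← pow_succ']
  rw [← hIReq] at hxR
  simp only [hI, Finset.mem_image, Finset.mem_univ, true_and] at hxR
  obtain ⟨y₀, hy₀⟩ := hxR
  have hfin := hfib (x ^ (q + 1)) ⟨y₀, hy₀⟩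
  rw [hKq] at hfin
  have hss : Finset.filter (fun y : F => x ^ (q + 1) = y + y ^ q) Finset.univ
      = Finset.filter (fun y : F => y + y ^ q = x ^ (q + 1)) Finset.univ :=
    Finset.filter_congr (fun y _ => eq_comm)
  rw [hss]
  exact hfin

include hq2 hfrob hcard in
/-- Single-point version: the `q³` monomials `x^i y^j` (`i < q²`, `j < q`) are linearly
independent as functions on the Hermitian curve. -/
lemma monoA (g : Fin (q ^ 2) × Fin q → F)
    (hg : ∀ z : Hsub F q, ∑ i : Fin (q ^ 2) × Fin q,
      g i * (z.1.1 ^ ((i.1 : ℕ)) * z.1.2 ^ ((i.2 : ℕ))) = 0) : g = 0 := by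
  have key : ∀ (x : F) (j : Fin q), ∑ i : Fin (q ^ 2), g (i, j) * x ^ (i : ℕ) = 0 := by
    intro x j
    set S := Finset.univ.filter (fun y : F => x ^ (q + 1) = y + y ^ q) with hS
    have hScard : S.card = q := fiber_card hq2 hfrob hcard x
    have h2 : ∀ y ∈ S, ∑ j' : Fin q,
        (∑ i : Fin (q ^ 2), g (i, j') * x ^ (i : ℕ)) * y ^ (j' : ℕ) = 0 := by
      intro y hy
      simp only [hS, Finset.mem_filter, Finset.mem_univ, true_and] at hy
      have hz := hg ⟨(x, y), hy⟩
      rw [Fintype.sum_prod_type] at hz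
      rw [Finset.sum_comm] at hz
      simp only [Finset.sum_mul, mul_assoc]
      exact hz
    exact aux_vanish S (le_of_eq hScard.symm) _ h2 j
  funext i
  obtain ⟨i1, i2⟩ := i
  have hall : ∀ y ∈ (Finset.univ : Finset F),
      ∑ i : Fin (q ^ 2), g (i, i2) * y ^ (i : ℕ) = 0 := fun y _ => key y i2
  have hcardF : q ^ 2 ≤ (Finset.univ : Finset F).card := by
    rw [Finset.card_univ, hcard]
  exact aux_vanish Finset.univ hcardF _ hall i1

include hq2 hfrob hcard in
/-- Multi-point version, by induction on `m`. -/
lemma monoM : ∀ (m : ℕ) (c : (Fin m → Fin (q ^ 2) × Fin q) → F),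
    (∀ z : Fin m → Hsub F q,
      ∑ e, c e * ∏ k, (z k).1.1 ^ ((e k).1 : ℕ) * (z k).1.2 ^ ((e k).2 : ℕ) = 0) →
    c = 0 := by
  intro m
  induction m with
  | zero =>
    intro c hc
    have h0 := hc (fun k => k.elim0)
    simp only [Finset.univ_unique, Finset.sum_singleton, Finset.univ_eq_empty,
      Finset.prod_empty, mul_one] at h0
    funext e
    have he : e = default := Subsingleton.elim _ _
    rw [he]
    exact h0
  | succ m ih =>
    intro c hc
    have hsum : ∀ f : (Fin (m + 1) → Fin (q ^ 2) × Fin q) → F,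
        ∑ e, f e = ∑ i : Fin (q ^ 2) × Fin q, ∑ e' : Fin m → Fin (q ^ 2) × Fin q,
          f (Fin.cons i e') := by
      intro f
      calc ∑ e, f e
          = ∑ p : (Fin (q ^ 2) × Fin q) × (Fin m → Fin (q ^ 2) × Fin q),
              f (Fin.cons p.1 p.2) :=
            Fintype.sum_equiv (Fin.consEquiv (fun _ => Fin (q ^ 2) × Fin q)).symm f
              (fun p => f (Fin.cons p.1 p.2)) (fun x => by
                simp [Fin.consEquiv, Fin.cons_self_tail])
        _ = ∑ i : Fin (q ^ 2) × Fin q, ∑ e' : Fin m → Fin (q ^ 2) × Fin q,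
              f (Fin.cons i e') := Fintype.sum_prod_type _
    have key : ∀ (i : Fin (q ^ 2) × Fin q) (e' : Fin m → Fin (q ^ 2) × Fin q),
        c (Fin.cons i e') = 0 := by
      have h1 : ∀ z' : Fin m → Hsub F q,
          (fun i : Fin (q ^ 2) × Fin q => ∑ e' : Fin m → Fin (q ^ 2) × Fin q,
            c (Fin.cons i e') *
              ∏ k, (z' k).1.1 ^ ((e' k).1 : ℕ) * (z' k).1.2 ^ ((e' k).2 : ℕ)) = 0 := by
        intro z'
        apply monoA hq2 hfrob hcard
        intro z0
        have hz := hc (Fin.cons z0 z')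
        rw [hsum] at hz
        simp only [Fin.prod_univ_succ, Fin.cons_zero, Fin.cons_succ] at hz
        simp only [Finset.sum_mul]
        rw [← hz]
        apply Finset.sum_congr rfl
        intro i _
        apply Finset.sum_congr rfl
        intro e' _
        ring
      intro i e'
      have h2 : (fun e' : Fin m → Fin (q ^ 2) × Fin q => c (Fin.cons i e')) = 0 := by
        apply ih
        intro z'
        exact congrFun (h1 z') i
      exact congrFun h2 e'
    funext e
    rw [← Fin.cons_self_tail e]
    exact key _ _

end Fiber

/-- The `q^(3m)` monomial functions `H^m → F`,
`(x₁,y₁,…,x_m,y_m) ↦ ∏ₖ x_k^(i_k) y_k^(j_k)` with `i_k < q²` and `j_k < q`, are linearly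
independent over `F`, and they span the space of all functions `H^m → F` (hence form a
basis, since `|H^m| = q^(3m)`). -/
theorem hermitian_monomials_basis {F : Type*} [Field F] [Fintype F] [DecidableEq F]
    (q : ℕ) (hq : ∃ p n : ℕ, p.Prime ∧ 0 < n ∧ q = p ^ n)
    (hcard : Fintype.card F = q ^ 2)
    (m : ℕ) (hm : 1 ≤ m) :
    LinearIndependent F (fun (e : Fin m → Fin (q ^ 2) × Fin q) =>
      fun p : Fin m → Hsub F q =>
        ∏ k, (p k).1.1 ^ (((e k).1 : ℕ)) * (p k).1.2 ^ (((e k).2 : ℕ))) ∧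
    Submodule.span F (Set.range (fun (e : Fin m → Fin (q ^ 2) × Fin q) =>
      fun p : Fin m → Hsub F q =>
        ∏ k, (p k).1.1 ^ (((e k).1 : ℕ)) * (p k).1.2 ^ (((e k).2 : ℕ)))) = ⊤ := by
  -- set up characteristic and Frobenius
  obtain ⟨p, n, hp, hn, rfl⟩ := hq
  haveI hFc : CharP F (ringChar F) := ringChar.charP F
  have hrp : (ringChar F).Prime := CharP.char_is_prime F (ringChar F)
  obtain ⟨k, -, hkcard⟩ := FiniteField.card F (ringChar F)
  have hdvd : p ∣ (ringChar F) ^ (k : ℕ) := by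
    rw [← hkcard, hcard, ← pow_mul]
    exact dvd_pow_self p (by positivity)
  have hpr : p = ringChar F :=
    (Nat.prime_dvd_prime_iff_eq hp hrp).mp (hp.dvd_of_dvd_pow hdvd)
  haveI : Fact p.Prime := ⟨hp⟩
  haveI : CharP F p := hpr ▸ hFc
  have hfrob : ∀ a b : F, (a + b) ^ p ^ n = a ^ p ^ n + b ^ p ^ n := fun a b =>
    add_pow_char_pow a b p n
  have hq2 : 2 ≤ p ^ n := Nat.one_lt_pow (by omega) hp.one_lt
  -- linear independence
  have hli : LinearIndependent F (fun (e : Fin m → Fin ((p ^ n) ^ 2) × Fin (p ^ n)) =>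
      fun z : Fin m → Hsub F (p ^ n) =>
        ∏ k, (z k).1.1 ^ (((e k).1 : ℕ)) * (z k).1.2 ^ (((e k).2 : ℕ))) := by
    rw [Fintype.linearIndependent_iff]
    intro g hg e
    have hgz : g = 0 := by
      apply monoM hq2 hfrob hcard m g
      intro z
      have := congrFun hg z
      simpa using this
    rw [hgz]
    rfl
  refine ⟨hli, ?_⟩
  -- cardinality of the curve
  have hcardH : Fintype.card (Hsub F (p ^ n)) = (p ^ n) ^ 3 := by
    have e : Hsub F (p ^ n) ≃ Σ x : F, {y : F // x ^ (p ^ n + 1) = y + y ^ p ^ n} :=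
      { toFun := fun z => ⟨z.1.1, z.1.2, z.2⟩
        invFun := fun w => ⟨(w.1, w.2.1), w.2.2⟩
        left_inv := fun z => rfl
        right_inv := fun w => rfl }
    rw [Fintype.card_congr e, Fintype.card_sigma]
    have hfx : ∀ x : F, Fintype.card {y : F // x ^ (p ^ n + 1) = y + y ^ p ^ n} = p ^ n := by
      intro x
      rw [Fintype.card_subtype]
      exact fiber_card hq2 hfrob hcard x
    rw [Finset.sum_congr rfl (fun x _ => hfx x), Finset.sum_const, smul_eq_mul,
      Finset.card_univ, hcard]
    ring
  -- spanning by dimension count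
  haveI : Nonempty (Fin ((p ^ n) ^ 2) × Fin (p ^ n)) :=
    ⟨(⟨0, by positivity⟩, ⟨0, by positivity⟩)⟩
  apply LinearIndependent.span_eq_top_of_card_eq_finrank hli
  rw [Module.finrank_fintype_fun_eq_card]
  rw [Fintype.card_fun, Fintype.card_fun]
  rw [Fintype.card_prod, Fintype.card_fin, Fintype.card_fin, Fintype.card_fin, hcardH]
  ring
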